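/- Let Q be an inverse quantal frame and X a principal Q-sheaf. For all local bisections s, t ∈ 𝔅_X with 1_Q·s = 1_Q·t, there is one and only one partial unit u ∈ Q_I such that s = ut and ς_Q(u*) = ς_X(t); moreover this unique u equals ⟨s,t⟩. -/

import Mathlib

/-- A unital involutive quantale: a complete lattice with an associative
multiplication preserving arbitrary joins in each variable, a unit `e`, and a
join-preserving involution. -/
structure UQuantale (Q : Type*) [CompleteLattice Q] where
  mul : Q → Q → Q
  e : Q
  star : Q → Q
  mul_assoc : ∀ a b c, mul (mul a b) c = mul a (mul b c)
  sSup_mul : ∀ (S : Set Q) (b : Q), mul (sSup S) b = ⨆ a ∈ S, mul a b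
  mul_sSup : ∀ (a : Q) (S : Set Q), mul a (sSup S) = ⨆ b ∈ S, mul a b
  e_mul : ∀ a, mul e a = a
  mul_e : ∀ a, mul a e = a
  star_star : ∀ a, star (star a) = a
  star_mul : ∀ a b, star (mul a b) = mul (star b) (star a)
  star_sSup : ∀ S : Set Q, star (sSup S) = ⨆ a ∈ S, star a

/-- The set of partial units of a quantale. -/
def UQuantale.PU {Q : Type*} [CompleteLattice Q] (Qs : UQuantale Q) : Set Q :=
  {s | Qs.mul s (Qs.star s) ≤ Qs.e ∧ Qs.mul (Qs.star s) s ≤ Qs.e}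

/-- An inverse quantal frame: a unital involutive quantale which is a frame,
has a stable support, and whose partial units join to the top. -/
structure InverseQuantalFrame (Q : Type*) [Order.Frame Q] extends toQuantale : UQuantale Q where
  supp : Q → Q
  supp_le_e : ∀ a, supp a ≤ e
  supp_sSup : ∀ S : Set Q, supp (sSup S) = ⨆ a ∈ S, supp a
  supp_le_mul_star : ∀ a, supp a ≤ mul a (star a)
  le_supp_mul : ∀ a, a ≤ mul (supp a) a
  supp_stable : ∀ b a, b ≤ e → supp (mul b a) = mul b (supp a)
  sSup_PU : sSup {s | mul s (star s) ≤ e ∧ mul (star s) s ≤ e} = ⊤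

/-- A left module over a quantale: a complete lattice with a unital associative
action preserving arbitrary joins in each variable. -/
structure QuantaleModule {Q : Type*} [CompleteLattice Q] (Qs : UQuantale Q)
    (X : Type*) [CompleteLattice X] where
  act : Q → X → X
  act_mul : ∀ a b x, act (Qs.mul a b) x = act a (act b x)
  act_e : ∀ x, act Qs.e x = x
  sSup_act : ∀ (S : Set Q) (x : X), act (sSup S) x = ⨆ a ∈ S, act a x
  act_sSup : ∀ (a : Q) (S : Set X), act a (sSup S) = ⨆ x ∈ S, act a x

/-- A pre-Hilbert module over a quantale. -/
structure PreHilbertModule {Q : Type*} [CompleteLattice Q] (Qs : UQuantale Q)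
    (X : Type*) [CompleteLattice X] extends QuantaleModule Qs X where
  inner : X → X → Q
  inner_act : ∀ a x y, inner (act a x) y = Qs.mul a (inner x y)
  sSup_inner : ∀ (S : Set X) (y : X), inner (sSup S) y = ⨆ x ∈ S, inner x y
  inner_star : ∀ x y, inner x y = Qs.star (inner y x)

namespace PreHilbertModule

variable {Q X : Type*} [CompleteLattice Q] [CompleteLattice X] {Qs : UQuantale Q}

/-- A Hilbert section: `⟨x,s⟩s ≤ x` for all `x`. -/
def IsHilbertSection (H : PreHilbertModule Qs X) (s : X) : Prop :=
  ∀ x, H.act (H.inner x s) s ≤ x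

/-- A regular element: `⟨s,s⟩s = s`. -/
def IsRegularSection (H : PreHilbertModule Qs X) (s : X) : Prop :=
  H.act (H.inner s s) s = s

/-- A Hilbert basis: `x = ⋁_{t ∈ S} ⟨x,t⟩t` for all `x`. -/
def IsHilbertBasis (H : PreHilbertModule Qs X) (S : Set X) : Prop :=
  ∀ x, x = ⨆ t ∈ S, H.act (H.inner x t) t

/-- Non-degeneracy of the inner product. -/
def Nondegenerate (H : PreHilbertModule Qs X) : Prop :=
  ∀ x y, (∀ z, H.inner x z = H.inner y z) → x = y

end PreHilbertModule

/-- A `Q`-locale over an inverse quantal frame: a module which is a frame and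
satisfies the anchor condition. -/
structure QLocale {Q : Type*} [Order.Frame Q] (Qf : InverseQuantalFrame Q)
    (X : Type*) [Order.Frame X] extends QuantaleModule Qf.toQuantale X where
  anchor : ∀ b x, b ≤ Qf.e → act b x = act b ⊤ ⊓ x

/-- A `Q`-sheaf over an inverse quantal frame: a pre-Hilbert module which is a
frame, satisfies the anchor condition, and has a Hilbert basis. -/
structure QSheaf {Q : Type*} [Order.Frame Q] (Qf : InverseQuantalFrame Q)
    (X : Type*) [Order.Frame X] extends PreHilbertModule Qf.toQuantale X where
  anchor : ∀ b x, b ≤ Qf.e → act b x = act b ⊤ ⊓ x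
  hasBasis : ∃ S : Set X, ∀ x, x = ⨆ t ∈ S, act (inner x t) t

namespace QSheaf

variable {Q X : Type*} [Order.Frame Q] [Order.Frame X] {Qf : InverseQuantalFrame Q}

/-- The support `ς_X(x) = ⟨x,x⟩ ∧ e` of a `Q`-sheaf. -/
def sppX (H : QSheaf Qf X) (x : X) : Q := H.inner x x ⊓ Qf.e

/-- A local section: `ς_X(x)s = x` for all `x ≤ s`. -/
def IsLocalSection (H : QSheaf Qf X) (s : X) : Prop :=
  ∀ x ≤ s, H.act (H.sppX x) s = x

/-- A principal section: a local section with `⟨s,s⟩ ≤ e`. -/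
def IsPrincipalSection (H : QSheaf Qf X) (s : X) : Prop :=
  H.IsLocalSection s ∧ H.inner s s ≤ Qf.e

/-- A right local section: `x = s ∧ 1_Q·x` for all `x ≤ s`. -/
def IsRightLocalSection (H : QSheaf Qf X) (s : X) : Prop :=
  ∀ x ≤ s, x = s ⊓ H.act ⊤ x

/-- A local bisection: simultaneously a local section and a right local section. -/
def IsBisection (H : QSheaf Qf X) (s : X) : Prop :=
  H.IsLocalSection s ∧ H.IsRightLocalSection s

end QSheaf


section Stmt17Aux

variable {Q X : Type*} [Order.Frame Q] [Order.Frame X]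
variable (Qf : InverseQuantalFrame Q) (H : QSheaf Qf X)

/-! ### Quantale lemmas -/

lemma q_mul_le_mul {a b c d : Q} (h1 : a ≤ b) (h2 : c ≤ d) :
    Qf.mul a c ≤ Qf.mul b d := by
  have hl : Qf.mul a c ≤ Qf.mul b c := by
    have h := Qf.sSup_mul {a, b} c
    rw [sSup_pair, sup_eq_right.mpr h1] at h
    rw [h]
    exact le_biSup (fun x => Qf.mul x c) (Set.mem_insert _ _)
  have hr : Qf.mul b c ≤ Qf.mul b d := by
    have h := Qf.mul_sSup b {c, d}
    rw [sSup_pair, sup_eq_right.mpr h2] at h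
    rw [h]
    exact le_biSup (fun x => Qf.mul b x) (Set.mem_insert _ _)
  exact hl.trans hr

lemma q_star_mono {a b : Q} (h : a ≤ b) : Qf.star a ≤ Qf.star b := by
  have hh := Qf.star_sSup {a, b}
  rw [sSup_pair, sup_eq_right.mpr h] at hh
  rw [hh]
  exact le_biSup (fun x => Qf.star x) (Set.mem_insert _ _)

lemma q_supp_mono {a b : Q} (h : a ≤ b) : Qf.supp a ≤ Qf.supp b := by
  have hh := Qf.supp_sSup {a, b}
  rw [sSup_pair, sup_eq_right.mpr h] at hh
  rw [hh]
  exact le_biSup (fun x => Qf.supp x) (Set.mem_insert _ _)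

lemma q_star_e : Qf.star Qf.e = Qf.e := by
  have h1 : Qf.star (Qf.mul Qf.e (Qf.star Qf.e)) = Qf.e := by
    rw [Qf.e_mul, Qf.star_star]
  have h2 : Qf.star (Qf.mul Qf.e (Qf.star Qf.e)) = Qf.star Qf.e := by
    rw [Qf.star_mul, Qf.star_star, Qf.e_mul]
  exact h2.symm.trans h1

lemma q_supp_e : Qf.supp Qf.e = Qf.e := by
  refine le_antisymm (Qf.supp_le_e _) ?_
  have h := Qf.le_supp_mul Qf.e
  rwa [Qf.mul_e] at h

lemma q_supp_of_le_e {b : Q} (h : b ≤ Qf.e) : Qf.supp b = b := by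
  have hh := Qf.supp_stable b Qf.e h
  rwa [Qf.mul_e, q_supp_e, Qf.mul_e] at hh

lemma q_le_star_of_le_e {b : Q} (h : b ≤ Qf.e) : b ≤ Qf.star b := by
  have h1 : b ≤ Qf.mul b (Qf.star b) := by
    have hh := Qf.supp_le_mul_star b
    rwa [q_supp_of_le_e Qf h] at hh
  have h2 : Qf.mul b (Qf.star b) ≤ Qf.star b := by
    have hh := q_mul_le_mul Qf h (le_refl (Qf.star b))
    rwa [Qf.e_mul] at hh
  exact h1.trans h2

lemma q_star_of_le_e {b : Q} (h : b ≤ Qf.e) : Qf.star b = b := by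
  have hb : b ≤ Qf.star b := q_le_star_of_le_e Qf h
  have hsb : Qf.star b ≤ Qf.e := (q_star_mono Qf h).trans (le_of_eq (q_star_e Qf))
  have h2 := q_le_star_of_le_e Qf hsb
  rw [Qf.star_star] at h2
  exact le_antisymm h2 hb

lemma q_supp_mul_self (a : Q) : Qf.mul (Qf.supp a) a = a := by
  refine le_antisymm ?_ (Qf.le_supp_mul a)
  have h := q_mul_le_mul Qf (Qf.supp_le_e a) (le_refl a)
  rwa [Qf.e_mul] at h

lemma q_mul_eq_inf {b : Q} (c : Q) (h : b ≤ Qf.e) :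
    Qf.mul b c = Qf.mul b ⊤ ⊓ c := by
  refine le_antisymm (le_inf (q_mul_le_mul Qf le_rfl le_top) ?_) ?_
  · have hh := q_mul_le_mul Qf h (le_refl c)
    rwa [Qf.e_mul] at hh
  · have hsupp : Qf.supp (Qf.mul b ⊤ ⊓ c) ≤ b := by
      have h1 : Qf.supp (Qf.mul b ⊤ ⊓ c) ≤ Qf.supp (Qf.mul b ⊤) :=
        q_supp_mono Qf inf_le_left
      have h2 : Qf.supp (Qf.mul b ⊤) = Qf.mul b (Qf.supp ⊤) := Qf.supp_stable b ⊤ h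
      have h3 : Qf.mul b (Qf.supp ⊤) ≤ Qf.mul b Qf.e :=
        q_mul_le_mul Qf le_rfl (Qf.supp_le_e ⊤)
      rw [Qf.mul_e] at h3
      exact h1.trans (le_of_eq h2 |>.trans h3)
    calc Qf.mul b ⊤ ⊓ c
        ≤ Qf.mul (Qf.supp (Qf.mul b ⊤ ⊓ c)) (Qf.mul b ⊤ ⊓ c) := Qf.le_supp_mul _
      _ ≤ Qf.mul b c := q_mul_le_mul Qf hsupp inf_le_right

lemma q_supp_eq (a : Q) : Qf.supp a = Qf.mul a (Qf.star a) ⊓ Qf.e := by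
  refine le_antisymm (le_inf (Qf.supp_le_mul_star a) (Qf.supp_le_e a)) ?_
  have key : Qf.mul a (Qf.star a) ≤ Qf.mul (Qf.supp a) ⊤ := by
    calc Qf.mul a (Qf.star a)
        = Qf.mul (Qf.mul (Qf.supp a) a) (Qf.star a) := by rw [q_supp_mul_self]
      _ = Qf.mul (Qf.supp a) (Qf.mul a (Qf.star a)) := Qf.mul_assoc _ _ _
      _ ≤ Qf.mul (Qf.supp a) ⊤ := q_mul_le_mul Qf le_rfl le_top
  have h2 : Qf.mul (Qf.supp a) ⊤ ⊓ Qf.e = Qf.supp a := by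
    rw [← q_mul_eq_inf Qf Qf.e (Qf.supp_le_e a), Qf.mul_e]
  calc Qf.mul a (Qf.star a) ⊓ Qf.e
      ≤ Qf.mul (Qf.supp a) ⊤ ⊓ Qf.e := inf_le_inf_right _ key
    _ = Qf.supp a := h2

lemma q_le_mul_supp_star (a : Q) : a ≤ Qf.mul a (Qf.supp (Qf.star a)) := by
  have h1 : Qf.star a ≤ Qf.mul (Qf.supp (Qf.star a)) (Qf.star a) :=
    Qf.le_supp_mul (Qf.star a)
  have h2 := q_star_mono Qf h1
  rw [Qf.star_star, Qf.star_mul, Qf.star_star,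
    q_star_of_le_e Qf (Qf.supp_le_e (Qf.star a))] at h2
  exact h2

lemma q_le_PU_expand (v : Q) : v ≤ Qf.mul (Qf.mul v (Qf.star v)) v := by
  refine (Qf.le_supp_mul v).trans (q_mul_le_mul Qf (Qf.supp_le_mul_star v) le_rfl)

lemma q_PU_inf {v : Q} (a : Q) (hv : v ∈ Qf.toQuantale.PU) :
    a ⊓ v ∈ Qf.toQuantale.PU := by
  constructor
  · calc Qf.mul (a ⊓ v) (Qf.star (a ⊓ v))
        ≤ Qf.mul v (Qf.star v) := q_mul_le_mul Qf inf_le_right (q_star_mono Qf inf_le_right)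
      _ ≤ Qf.e := hv.1
  · calc Qf.mul (Qf.star (a ⊓ v)) (a ⊓ v)
        ≤ Qf.mul (Qf.star v) v := q_mul_le_mul Qf (q_star_mono Qf inf_le_right) inf_le_right
      _ ≤ Qf.e := hv.2

lemma q_top_eq : (⊤ : Q) = ⨆ v : Qf.toQuantale.PU, (v : Q) := by
  have h : sSup Qf.toQuantale.PU = ⊤ := Qf.sSup_PU
  rw [← h, sSup_eq_iSup']

lemma q_star_iSup {ι : Sort*} (f : ι → Q) :
    Qf.star (⨆ i, f i) = ⨆ i, Qf.star (f i) := by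
  rw [iSup, Qf.star_sSup, iSup_range]

/-! ### Module lemmas -/

lemma x_act_mono {a b : Q} {x y : X} (h1 : a ≤ b) (h2 : x ≤ y) :
    H.act a x ≤ H.act b y := by
  have hl : H.act a x ≤ H.act b x := by
    have h := H.sSup_act {a, b} x
    rw [sSup_pair, sup_eq_right.mpr h1] at h
    rw [h]
    exact le_biSup (fun c => H.act c x) (Set.mem_insert _ _)
  have hr : H.act b x ≤ H.act b y := by
    have h := H.act_sSup b {x, y}
    rw [sSup_pair, sup_eq_right.mpr h2] at h
    rw [h]
    exact le_biSup (fun z => H.act b z) (Set.mem_insert _ _)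
  exact hl.trans hr

lemma x_inner_mono {x y z w : X} (h1 : x ≤ y) (h2 : z ≤ w) :
    H.inner x z ≤ H.inner y w := by
  have hl : H.inner x z ≤ H.inner y z := by
    have h := H.sSup_inner {x, y} z
    rw [sSup_pair, sup_eq_right.mpr h1] at h
    rw [h]
    exact le_biSup (fun c => H.inner c z) (Set.mem_insert _ _)
  have hr : H.inner y z ≤ H.inner y w := by
    rw [H.inner_star y z, H.inner_star y w]
    exact q_star_mono Qf (by
      have h := H.sSup_inner {z, w} y
      rw [sSup_pair, sup_eq_right.mpr h2] at h
      rw [h]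
      exact le_biSup (fun c => H.inner c y) (Set.mem_insert _ _))
  exact hl.trans hr

lemma x_inner_act_right (a : Q) (x y : X) :
    H.inner x (H.act a y) = Qf.mul (H.inner x y) (Qf.star a) := by
  rw [H.inner_star x (H.act a y), H.inner_act, Qf.star_mul, ← H.inner_star]

lemma x_act_iSup_left {ι : Sort*} (f : ι → Q) (x : X) :
    H.act (⨆ i, f i) x = ⨆ i, H.act (f i) x := by
  rw [iSup, H.sSup_act, iSup_range]

lemma x_act_iSup_right {ι : Sort*} (a : Q) (f : ι → X) :
    H.act a (⨆ i, f i) = ⨆ i, H.act a (f i) := by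
  rw [iSup, H.act_sSup, iSup_range]

lemma x_inner_iSup_left {ι : Sort*} (f : ι → X) (y : X) :
    H.inner (⨆ i, f i) y = ⨆ i, H.inner (f i) y := by
  rw [iSup, H.sSup_inner, iSup_range]

lemma x_inner_iSup_right {ι : Sort*} (x : X) (f : ι → X) :
    H.inner x (⨆ i, f i) = ⨆ i, H.inner x (f i) := by
  rw [H.inner_star x, x_inner_iSup_left Qf H f x, q_star_iSup]
  exact iSup_congr fun i => (H.inner_star x (f i)).symm

lemma x_sppX_le_e (x : X) : H.sppX x ≤ Qf.e := inf_le_right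

lemma x_sppX_le_inner (x : X) : H.sppX x ≤ H.inner x x := inf_le_left

lemma x_le_act_sppX (x : X) : x ≤ H.act (H.sppX x) x := by
  obtain ⟨S, hS⟩ := H.hasBasis
  conv_lhs => rw [hS x]
  refine iSup₂_le fun t ht => ?_
  have hb : H.act (H.inner x t) t ≤ x := by
    conv_rhs => rw [hS x]
    exact le_biSup (fun t => H.act (H.inner x t) t) ht
  have h2 : Qf.mul (H.inner x t) (Qf.star (H.inner x t))
      = H.inner (H.act (H.inner x t) t) x := by
    rw [H.inner_act]
    congr 1
    exact (H.inner_star t x).symm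
  have hsupp_le : Qf.supp (H.inner x t) ≤ H.sppX x := by
    calc Qf.supp (H.inner x t)
        = Qf.mul (H.inner x t) (Qf.star (H.inner x t)) ⊓ Qf.e := q_supp_eq Qf _
      _ = H.inner (H.act (H.inner x t) t) x ⊓ Qf.e := by rw [h2]
      _ ≤ H.inner x x ⊓ Qf.e := inf_le_inf_right _ (x_inner_mono Qf H hb le_rfl)
  calc H.act (H.inner x t) t
      = H.act (Qf.mul (Qf.supp (H.inner x t)) (H.inner x t)) t := by
        rw [q_supp_mul_self]
    _ = H.act (Qf.supp (H.inner x t)) (H.act (H.inner x t) t) := H.act_mul _ _ _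
    _ ≤ H.act (H.sppX x) x := x_act_mono Qf H hsupp_le hb

lemma x_act_sppX_self (x : X) : H.act (H.sppX x) x = x := by
  refine le_antisymm ?_ (x_le_act_sppX Qf H x)
  have h := x_act_mono Qf H (x_sppX_le_e Qf H x) (le_refl x)
  rwa [H.act_e] at h

/-! ### Hilbert sections -/

def XHilb (s : X) : Prop := ∀ x, H.act (H.inner x s) s ≤ x

lemma xhilb_mono {s t : X} (hs : XHilb Qf H s) (hts : t ≤ s) : XHilb Qf H t := by
  intro x
  exact le_trans (x_act_mono Qf H (x_inner_mono Qf H le_rfl hts) hts) (hs x)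

lemma xhilb_act_PU {a : Q} {h : X} (ha : a ∈ Qf.toQuantale.PU)
    (hh : XHilb Qf H h) : XHilb Qf H (H.act a h) := by
  intro x
  calc H.act (H.inner x (H.act a h)) (H.act a h)
      = H.act (Qf.mul (H.inner x h) (Qf.star a)) (H.act a h) := by
        rw [x_inner_act_right]
    _ = H.act (H.inner x h) (H.act (Qf.star a) (H.act a h)) := by rw [H.act_mul]
    _ = H.act (H.inner x h) (H.act (Qf.mul (Qf.star a) a) h) := by rw [H.act_mul]
    _ ≤ H.act (H.inner x h) (H.act Qf.e h) :=
        x_act_mono Qf H le_rfl (x_act_mono Qf H ha.2 le_rfl)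
    _ = H.act (H.inner x h) h := by rw [H.act_e]
    _ ≤ x := hh x

lemma x_hilb_cover (x : X) : x ≤ sSup {h : X | XHilb Qf H h ∧ h ≤ x} := by
  obtain ⟨S, hS⟩ := H.hasBasis
  conv_lhs => rw [hS x]
  refine iSup₂_le fun t ht => ?_
  have htH : XHilb Qf H t := by
    intro y
    conv_rhs => rw [hS y]
    exact le_biSup (fun t => H.act (H.inner y t) t) ht
  have hbx : H.act (H.inner x t) t ≤ x := by
    conv_rhs => rw [hS x]
    exact le_biSup (fun t => H.act (H.inner x t) t) ht
  have h1 : H.act (H.inner x t) t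
      = ⨆ v : Qf.toQuantale.PU, H.act (H.inner x t ⊓ (v : Q)) t := by
    conv_lhs => rw [← inf_top_eq (H.inner x t)]
    rw [q_top_eq Qf, inf_iSup_eq, x_act_iSup_left]
  rw [h1]
  refine iSup_le fun v => le_sSup ?_
  constructor
  · exact xhilb_act_PU Qf H (q_PU_inf Qf (H.inner x t) v.2) htH
  · calc H.act (H.inner x t ⊓ (v : Q)) t
        ≤ H.act (H.inner x t) t := x_act_mono Qf H inf_le_left le_rfl
      _ ≤ x := hbx

lemma x_cross {s : X} (h h' x : X) (hs : H.IsLocalSection s) (hh : XHilb Qf H h)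
    (hhs : h ≤ s) (hh's : h' ≤ s) : H.act (H.inner x h) h' ≤ x := by
  set k := H.act (H.sppX h') h with hk
  have hk_h : k ≤ h := by
    have hle := x_act_mono Qf H (x_sppX_le_e Qf H h') (le_refl h)
    rwa [H.act_e] at hle
  have hk_h' : k ≤ h' := by
    calc k ≤ H.act (H.sppX h') s := x_act_mono Qf H le_rfl hhs
      _ = h' := hs h' hh's
  have hkH : XHilb Qf H k := xhilb_mono Qf H hh hk_h
  have hks : k ≤ s := hk_h.trans hhs
  have hk_eq : H.act (H.sppX k) s = k := hs k hks
  have hk_fix : H.act (H.sppX k) k = k := x_act_sppX_self Qf H k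
  have e1 : H.act (H.inner x h) h' = H.act (H.inner x k) s := by
    conv_lhs => rw [← hs h' hh's]
    rw [← H.act_mul]
    congr 1
    rw [hk, x_inner_act_right, q_star_of_le_e Qf (x_sppX_le_e Qf H h')]
  have e2 : H.inner x k = Qf.mul (H.inner x k) (H.sppX k) := by
    conv_lhs => rw [← hk_fix]
    rw [x_inner_act_right, q_star_of_le_e Qf (x_sppX_le_e Qf H k)]
  calc H.act (H.inner x h) h' = H.act (H.inner x k) s := e1
    _ = H.act (Qf.mul (H.inner x k) (H.sppX k)) s := by rw [← e2]
    _ = H.act (H.inner x k) (H.act (H.sppX k) s) := H.act_mul _ _ _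
    _ = H.act (H.inner x k) k := by rw [hk_eq]
    _ ≤ x := hkH x

lemma x_local_hilb (s : X) (hs : H.IsLocalSection s) : XHilb Qf H s := by
  intro x
  set T := {h : X | XHilb Qf H h ∧ h ≤ s} with hT
  have hsT : s = sSup T := le_antisymm (x_hilb_cover Qf H s) (sSup_le fun h hh => hh.2)
  have hsT' : s = ⨆ h : T, (h : X) := by rw [hsT, sSup_eq_iSup']
  calc H.act (H.inner x s) s
      = H.act (H.inner x (⨆ h : T, (h : X))) (⨆ h' : T, (h' : X)) := by rw [← hsT']
    _ = ⨆ h : T, H.act (H.inner x (h : X)) (⨆ h' : T, (h' : X)) := by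
        rw [x_inner_iSup_right, x_act_iSup_left]
    _ = ⨆ h : T, ⨆ h' : T, H.act (H.inner x (h : X)) (h' : X) :=
        iSup_congr fun h => x_act_iSup_right Qf H _ _
    _ ≤ x := iSup_le fun h => iSup_le fun h' =>
        x_cross Qf H (h : X) (h' : X) x hs h.2.1 h.2.2 h'.2.2

/-! ### Lemma A: recovering a piece from a local section over the same orbits -/

lemma x_le_inner_act (t y : X) (ht : H.IsLocalSection t) (hy : y ≤ H.act ⊤ t) :
    y ≤ H.act (H.inner y t) t := by
  have htop : H.act ⊤ t = ⨆ v : Qf.toQuantale.PU, H.act (v : Q) t := by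
    rw [q_top_eq Qf, x_act_iSup_left]
  have hy2 : y = ⨆ v : Qf.toQuantale.PU, (y ⊓ H.act (v : Q) t) := by
    conv_lhs => rw [← inf_eq_left.mpr hy]
    rw [htop, inf_iSup_eq]
  refine le_trans (le_of_eq hy2) (iSup_le fun v => ?_)
  obtain ⟨v, hv⟩ := v
  set w := y ⊓ H.act v t with hw
  set k := H.act (Qf.star v) w with hkdef
  have hk_t : k ≤ t := by
    calc k ≤ H.act (Qf.star v) (H.act v t) := x_act_mono Qf H le_rfl inf_le_right
      _ = H.act (Qf.mul (Qf.star v) v) t := (H.act_mul _ _ _).symm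
      _ ≤ H.act Qf.e t := x_act_mono Qf H hv.2 le_rfl
      _ = t := H.act_e t
  have hw_b : w ≤ H.act (Qf.mul v (Qf.star v)) ⊤ := by
    calc w ≤ H.act v t := inf_le_right
      _ ≤ H.act (Qf.mul (Qf.mul v (Qf.star v)) v) t :=
          x_act_mono Qf H (q_le_PU_expand Qf v) le_rfl
      _ = H.act (Qf.mul v (Qf.star v)) (H.act v t) := H.act_mul _ _ _
      _ ≤ H.act (Qf.mul v (Qf.star v)) ⊤ := x_act_mono Qf H le_rfl le_top
  have hw_eq : H.act (Qf.mul v (Qf.star v)) w = w := by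
    rw [H.anchor _ _ hv.1]
    exact inf_eq_right.mpr hw_b
  have hw_vk : w = H.act v k := by
    rw [hkdef, ← H.act_mul]
    exact hw_eq.symm
  have hkl : H.act (H.sppX k) t = k := ht k hk_t
  have key : Qf.mul v (H.sppX k) ≤ H.inner y t := by
    calc Qf.mul v (H.sppX k)
        ≤ Qf.mul v (H.inner k k) := q_mul_le_mul Qf le_rfl (x_sppX_le_inner Qf H k)
      _ = H.inner (H.act v k) k := (H.inner_act v k k).symm
      _ = H.inner w k := by rw [← hw_vk]
      _ ≤ H.inner y t := x_inner_mono Qf H inf_le_left hk_t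
  calc w = H.act v k := hw_vk
    _ = H.act v (H.act (H.sppX k) t) := by rw [hkl]
    _ = H.act (Qf.mul v (H.sppX k)) t := (H.act_mul _ _ _).symm
    _ ≤ H.act (H.inner y t) t := x_act_mono Qf H key le_rfl

/-! ### Lemma B: bisections have small self inner product -/

lemma x_inner_self_le_e (s : X) (hsr : H.IsRightLocalSection s)
    (hpc : sSup {p : X | H.IsPrincipalSection p} = ⊤) :
    H.inner s s ≤ Qf.e := by
  set P := {p : X | H.IsPrincipalSection p} with hP
  have hdec : s = ⨆ p : P, (s ⊓ (p : X)) := by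
    conv_lhs => rw [← inf_top_eq s, ← hpc, sSup_eq_iSup', inf_iSup_eq]
  have key : ∀ p q : X, H.IsPrincipalSection p → H.IsPrincipalSection q →
      H.inner (s ⊓ q) (s ⊓ p) ≤ Qf.e := by
    intro p q hp hq
    set y := s ⊓ p with hy
    set x := s ⊓ q with hx
    have hyH : XHilb Qf H y := xhilb_mono Qf H (x_local_hilb Qf H p hp.1) inf_le_right
    have hxH : XHilb Qf H x := xhilb_mono Qf H (x_local_hilb Qf H q hq.1) inf_le_right
    have hyy : H.inner y y ≤ Qf.e :=
      le_trans (x_inner_mono Qf H inf_le_right inf_le_right) hp.2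
    set d := H.inner x y with hd
    have hdy_x : H.act d y ≤ x := hyH x
    have hdy_top : H.act d y ≤ H.act ⊤ y := x_act_mono Qf H le_top le_rfl
    have hy_rl : y = s ⊓ H.act ⊤ y := hsr y inf_le_left
    have hdy_y : H.act d y ≤ y := by
      conv_rhs => rw [hy_rl]
      exact le_inf (hdy_x.trans inf_le_left) hdy_top
    have hstar_d : Qf.star d = H.inner y x := (H.inner_star y x).symm
    have hdd : Qf.mul (Qf.star d) d ≤ H.inner y y := by
      rw [hstar_d]
      calc Qf.mul (H.inner y x) (H.inner x y)
          = H.inner (H.act (H.inner y x) x) y := (H.inner_act _ _ _).symm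
        _ ≤ H.inner y y := x_inner_mono Qf H (hxH y) le_rfl
    have hsupp : Qf.supp (Qf.star d) ≤ H.inner y y := by
      rw [q_supp_eq, Qf.star_star]
      exact le_trans inf_le_left hdd
    calc d ≤ Qf.mul d (Qf.supp (Qf.star d)) := q_le_mul_supp_star Qf d
      _ ≤ Qf.mul d (H.inner y y) := q_mul_le_mul Qf le_rfl hsupp
      _ = H.inner (H.act d y) y := (H.inner_act _ _ _).symm
      _ ≤ H.inner y y := x_inner_mono Qf H hdy_y le_rfl
      _ ≤ Qf.e := hyy
  calc H.inner s s
      = ⨆ q : P, ⨆ p : P, H.inner (s ⊓ (q : X)) (s ⊓ (p : X)) := by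
        conv_lhs => rw [hdec]
        rw [x_inner_iSup_left]
        exact iSup_congr fun q => x_inner_iSup_right Qf H _ _
    _ ≤ Qf.e := iSup_le fun q => iSup_le fun p => key (p : X) (q : X) p.2 q.2

end Stmt17Aux

/-- In a principal `Q`-sheaf, for local bisections `s, t` with
`1_Q·s = 1_Q·t` there is a unique partial unit `u` with `s = ut` and
`ς_Q(u*) = ς_X(t)`, and this `u` equals `⟨s,t⟩`. -/
theorem stmt17 {Q X : Type*} [Order.Frame Q] [Order.Frame X]
    (Qf : InverseQuantalFrame Q) (H : QSheaf Qf X)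
    -- X is a principal Q-sheaf (principally covered and a bisheaf):
    (hpc : sSup {s : X | H.IsPrincipalSection s} = ⊤)
    (hbisheaf : sSup {s : X | H.IsRightLocalSection s} = ⊤)
    (s t : X) (hs : H.IsBisection s) (ht : H.IsBisection t)
    (hst : H.act ⊤ s = H.act ⊤ t) :
    (∃! u : Q, u ∈ Qf.toQuantale.PU ∧ s = H.act u t ∧
        Qf.supp (Qf.star u) = H.sppX t) ∧
    (H.inner s t ∈ Qf.toQuantale.PU ∧ s = H.act (H.inner s t) t ∧
        Qf.supp (Qf.star (H.inner s t)) = H.sppX t) := by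
  obtain ⟨hsl, hsr⟩ := hs
  obtain ⟨htl, htr⟩ := ht
  have hsle : s ≤ H.act ⊤ t := by
    rw [← hst]
    calc s = H.act Qf.e s := (H.act_e s).symm
      _ ≤ H.act ⊤ s := x_act_mono Qf H le_top le_rfl
  have htle : t ≤ H.act ⊤ s := by
    rw [hst]
    calc t = H.act Qf.e t := (H.act_e t).symm
      _ ≤ H.act ⊤ t := x_act_mono Qf H le_top le_rfl
  have hA1 : H.act (H.inner s t) t = s :=
    le_antisymm (x_local_hilb Qf H t htl s) (x_le_inner_act Qf H t s htl hsle)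
  have hA2 : H.act (H.inner t s) s = t :=
    le_antisymm (x_local_hilb Qf H s hsl t) (x_le_inner_act Qf H s t hsl htle)
  have hss : H.inner s s ≤ Qf.e := x_inner_self_le_e Qf H s hsr hpc
  have htt : H.inner t t ≤ Qf.e := x_inner_self_le_e Qf H t htr hpc
  have hstar_u : Qf.star (H.inner s t) = H.inner t s := (H.inner_star t s).symm
  have huu : Qf.mul (H.inner s t) (Qf.star (H.inner s t)) = H.inner s s := by
    rw [hstar_u]
    calc Qf.mul (H.inner s t) (H.inner t s)
        = H.inner (H.act (H.inner s t) t) s := (H.inner_act _ _ _).symm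
      _ = H.inner s s := by rw [hA1]
  have hu'u : Qf.mul (Qf.star (H.inner s t)) (H.inner s t) = H.inner t t := by
    rw [hstar_u]
    calc Qf.mul (H.inner t s) (H.inner s t)
        = H.inner (H.act (H.inner t s) s) t := (H.inner_act _ _ _).symm
      _ = H.inner t t := by rw [hA2]
  have hPU : H.inner s t ∈ Qf.toQuantale.PU := by
    constructor
    · rw [huu]; exact hss
    · rw [hu'u]; exact htt
  have hsupp : Qf.supp (Qf.star (H.inner s t)) = H.sppX t := by
    rw [q_supp_eq, Qf.star_star, hu'u]
    rfl
  have hmain : H.inner s t ∈ Qf.toQuantale.PU ∧ s = H.act (H.inner s t) t ∧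
      Qf.supp (Qf.star (H.inner s t)) = H.sppX t := ⟨hPU, hA1.symm, hsupp⟩
  refine ⟨⟨H.inner s t, hmain, ?_⟩, hmain⟩
  rintro u' ⟨hu'PU, hs_eq, hsupp'⟩
  have httle : H.sppX t ≤ H.inner t t := inf_le_left
  have le1 : u' ≤ H.inner s t := by
    calc u' ≤ Qf.mul u' (Qf.supp (Qf.star u')) := q_le_mul_supp_star Qf u'
      _ = Qf.mul u' (H.sppX t) := by rw [hsupp']
      _ ≤ Qf.mul u' (H.inner t t) := q_mul_le_mul Qf le_rfl httle
      _ = H.inner (H.act u' t) t := (H.inner_act _ _ _).symm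
      _ = H.inner s t := by rw [← hs_eq]
  have le2 : H.inner s t ≤ u' := by
    calc H.inner s t = H.inner (H.act u' t) t := by rw [← hs_eq]
      _ = Qf.mul u' (H.inner t t) := H.inner_act _ _ _
      _ ≤ Qf.mul u' Qf.e := q_mul_le_mul Qf le_rfl htt
      _ = u' := Qf.mul_e u'
  exact le_antisymm le1 le2
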